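/- Let γ > 0 and p > 1, and for each m ∈ ℕ define ψ_m : ℝ² → ℂ by ψ_m(x₁,x₂) = (γ^((m+1)/2)/√(π·m!))·(x₁ + i x₂)^m·exp(−γ(x₁²+x₂²)/2). Then the nonlinear energy integrals tend to zero: ∫_{ℝ²} |ψ_m(x)|^(p+1) dx → 0 as m → ∞. -/

import Mathlib

open MeasureTheory
open Real Filter

/-- `t^m e^{-t} ≤ m^m e^{-m}` for `t ≥ 0`. -/
lemma aux_pow_mul_exp_neg_le (m : ℕ) {t : ℝ} (ht : 0 ≤ t) :
    t ^ m * Real.exp (-t) ≤ (m : ℝ) ^ m * Real.exp (-(m : ℝ)) := by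
  rcases Nat.eq_zero_or_pos m with hm | hm
  · subst hm
    simpa using Real.exp_le_one_iff.mpr (neg_nonpos.mpr ht)
  · have hm' : (0 : ℝ) < m := by exact_mod_cast hm
    have h1 : t ≤ (m : ℝ) * Real.exp (t / m - 1) := by
      have := Real.add_one_le_exp (t / m - 1)
      have h2 : t / m ≤ Real.exp (t / m - 1) := by linarith
      calc t = (m : ℝ) * (t / m) := by field_simp
        _ ≤ (m : ℝ) * Real.exp (t / m - 1) := by
            exact mul_le_mul_of_nonneg_left h2 hm'.le
    have h3 : t ^ m ≤ ((m : ℝ) * Real.exp (t / m - 1)) ^ m :=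
      pow_le_pow_left₀ ht h1 m
    have h4 : ((m : ℝ) * Real.exp (t / m - 1)) ^ m
        = (m : ℝ) ^ m * Real.exp (t - m) := by
      rw [mul_pow, ← Real.exp_nat_mul]
      congr 1
      field_simp
    calc t ^ m * Real.exp (-t) ≤ (m : ℝ) ^ m * Real.exp (t - m) * Real.exp (-t) := by
          rw [← h4]; exact mul_le_mul_of_nonneg_right h3 (Real.exp_nonneg _)
      _ = (m : ℝ) ^ m * Real.exp (-(m : ℝ)) := by
          rw [mul_assoc, ← Real.exp_add]; ring_nf

lemma aux_integral {γ : ℝ} (hγ : 0 < γ) (m : ℕ) :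
    ∫ z : ℂ, ‖z‖ ^ (2 * m) * Real.exp (-(γ * ‖z‖ ^ 2))
      = π * m.factorial / γ ^ (m + 1) := by
  have h := Complex.integral_rpow_mul_exp_neg_mul_rpow
    (p := 2) (q := (2 * m : ℕ)) (b := γ) one_le_two
    (lt_of_lt_of_le (by norm_num) (Nat.cast_nonneg _)) hγ
  have e1 : ∀ z : ℂ, ‖z‖ ^ ((2 * m : ℕ) : ℝ) * Real.exp (-γ * ‖z‖ ^ (2:ℝ))
      = ‖z‖ ^ (2 * m) * Real.exp (-(γ * ‖z‖ ^ 2)) := by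
    intro z
    rw [Real.rpow_natCast, show (2:ℝ) = ((2:ℕ):ℝ) by norm_num, Real.rpow_natCast,
      neg_mul]
  rw [show (∫ z : ℂ, ‖z‖ ^ (2 * m) * Real.exp (-(γ * ‖z‖ ^ 2)))
      = ∫ z : ℂ, ‖z‖ ^ ((2 * m : ℕ) : ℝ) * Real.exp (-γ * ‖z‖ ^ (2:ℝ)) from
    integral_congr_ae (Filter.Eventually.of_forall fun z => (e1 z).symm), h]
  have e2 : (-(((2 * m : ℕ) : ℝ) + 2) / 2) = -(((m + 1 : ℕ)) : ℝ) := by push_cast; ring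
  have e3 : ((((2 * m : ℕ) : ℝ)) + 2) / 2 = ((m : ℝ) + 1) := by push_cast; ring
  rw [e2, e3, Real.Gamma_nat_eq_factorial, Real.rpow_neg hγ.le, Real.rpow_natCast]
  field_simp

lemma aux_integrable {γ : ℝ} (hγ : 0 < γ) (m : ℕ) :
    Integrable (fun z : ℂ => ‖z‖ ^ (2 * m) * Real.exp (-(γ * ‖z‖ ^ 2))) := by
  have hbase : Integrable (fun v : ℂ => Real.exp (-(γ/2 * ‖v‖ ^ 2))) := by
    have h := (GaussianFourier.integrable_cexp_neg_mul_sq_norm_add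
      (V := ℂ) (b := ((γ/2 : ℝ) : ℂ)) (by rw [Complex.ofReal_re]; positivity) 0 0).norm
    refine h.congr (Filter.Eventually.of_forall fun v => ?_)
    have hv : (-(↑(γ/2):ℂ) * (↑‖v‖:ℂ)^2 + 0 * ↑(inner ℝ (0:ℂ) v : ℝ)) = ((-(γ/2 * ‖v‖^2) : ℝ) : ℂ) := by
      push_cast; ring
    simp only [Complex.norm_exp] at hv ⊢
    rw [hv, Complex.ofReal_re]
  set K : ℝ := ((m:ℝ) ^ m * Real.exp (-(m:ℝ))) / (γ/2) ^ m with hK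
  refine Integrable.mono' (hbase.const_mul K) ?_ ?_
  · apply Continuous.aestronglyMeasurable
    fun_prop
  · refine Filter.Eventually.of_forall fun z => ?_
    have hz : (0:ℝ) ≤ ‖z‖ := norm_nonneg z
    rw [Real.norm_eq_abs, abs_of_nonneg (by positivity)]
    have key := aux_pow_mul_exp_neg_le m (t := γ/2 * ‖z‖^2) (by positivity)
    have h1 : ‖z‖ ^ (2*m) * Real.exp (-(γ * ‖z‖^2))
        = ((γ/2 * ‖z‖^2) ^ m * Real.exp (-(γ/2 * ‖z‖^2))) / (γ/2) ^ m
            * Real.exp (-(γ/2 * ‖z‖^2)) := by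
      rw [mul_pow, pow_mul]
      rw [show -(γ * ‖z‖^2) = -(γ/2 * ‖z‖^2) + -(γ/2 * ‖z‖^2) by ring, Real.exp_add]
      field_simp
    rw [h1, hK]
    gcongr


lemma aux_stirling_tendsto :
    Tendsto (fun m : ℕ => (m : ℝ) ^ m * Real.exp (-(m : ℝ)) / m.factorial)
      atTop (nhds 0) := by
  have hst := Stirling.tendsto_stirlingSeq_sqrt_pi
  have h1 : Tendsto (fun m : ℕ => (Stirling.stirlingSeq m)⁻¹) atTop
      (nhds (Real.sqrt π)⁻¹) := hst.inv₀ (by positivity)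
  have hsqrt : Tendsto Real.sqrt atTop atTop := by
    rw [show Real.sqrt = fun x : ℝ => x ^ (1/2 : ℝ) from funext Real.sqrt_eq_rpow]
    exact tendsto_rpow_atTop (by norm_num)
  have h2m : Tendsto (fun m : ℕ => 2 * (m : ℝ)) atTop atTop :=
    Tendsto.const_mul_atTop two_pos tendsto_natCast_atTop_atTop
  have h2 : Tendsto (fun m : ℕ => (Real.sqrt (2 * m))⁻¹) atTop (nhds 0) :=
    tendsto_inv_atTop_zero.comp (hsqrt.comp h2m)
  have h3 : Tendsto (fun m : ℕ =>
      (Stirling.stirlingSeq m)⁻¹ * (Real.sqrt (2 * m))⁻¹) atTop (nhds 0) := by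
    simpa using h1.mul h2
  refine h3.congr' ?_
  filter_upwards [Filter.eventually_ge_atTop 1] with m hm
  have hm' : (0 : ℝ) < m := by exact_mod_cast hm
  have hfac : (0:ℝ) < m.factorial := by exact_mod_cast m.factorial_pos
  have hs : (0:ℝ) < Real.sqrt (2 * m) := Real.sqrt_pos.mpr (by positivity)
  unfold Stirling.stirlingSeq
  have hpow : ((m : ℝ) / Real.exp 1) ^ m = (m:ℝ) ^ m * Real.exp (-(m:ℝ)) := by
    rw [div_pow, Real.exp_one_pow, Real.exp_neg]
    ring
  rw [inv_div, hpow]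
  field_simp

/-- the nonlinear energy integrals `∫ |ψ_m|^(p+1)` of the 2D vortex functions
tend to zero as `m → ∞`. -/
theorem vortex_nonlinear_energy_tendsto_zero
    (γ p : ℝ) (hγ : 0 < γ) (hp : 1 < p) :
    Filter.Tendsto
      (fun m : ℕ =>
        ∫ x : EuclideanSpace ℝ (Fin 2),
          ‖((γ ^ (((m : ℝ) + 1) / 2) / Real.sqrt (Real.pi * m.factorial) : ℝ) : ℂ) *
              ((x 0 : ℂ) + Complex.I * (x 1 : ℂ)) ^ m *
              Complex.exp (((-(γ * ((x 0) ^ 2 + (x 1) ^ 2)) / 2 : ℝ) : ℂ))‖ ^ (p + 1))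
      Filter.atTop (nhds 0) := by
  have hπ : (0:ℝ) < π := Real.pi_pos
  set C : ℕ → ℝ := fun m => γ ^ (((m : ℝ) + 1) / 2) / Real.sqrt (π * m.factorial) with hCdef
  have hCpos : ∀ m, 0 < C m := fun m => div_pos (Real.rpow_pos_of_pos hγ _)
    (Real.sqrt_pos.mpr (by positivity))
  set g : ℕ → ℂ → ℝ := fun m z => C m * ‖z‖ ^ m * Real.exp (-(γ * ‖z‖ ^ 2) / 2) with hgdef
  have hgnn : ∀ m z, 0 ≤ g m z := fun m z => by
    have := (hCpos m).le; simp only [hgdef]; positivity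
  set S : ℕ → ℝ := fun m => (C m)^2 * ((m : ℝ)/γ)^m * Real.exp (-(m:ℝ)) with hSdef
  have hSnn : ∀ m, 0 ≤ S m := fun m => by
    have := (hCpos m).le
    simp only [hSdef]
    positivity
  have hC2 : ∀ m, (C m)^2 = γ ^ (m+1) / (π * m.factorial) := by
    intro m
    simp only [hCdef]
    rw [div_pow, Real.sq_sqrt (by positivity)]
    congr 1
    rw [← Real.rpow_natCast (γ ^ (((m : ℝ) + 1) / 2)) 2, ← Real.rpow_mul hγ.le,
      ← Real.rpow_natCast γ (m+1)]
    congr 1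
    push_cast
    ring
  -- Step A : rewrite the integral over ℂ
  have hA : ∀ m : ℕ,
      (∫ x : EuclideanSpace ℝ (Fin 2),
          ‖((γ ^ (((m : ℝ) + 1) / 2) / Real.sqrt (Real.pi * m.factorial) : ℝ) : ℂ) *
              ((x 0 : ℂ) + Complex.I * (x 1 : ℂ)) ^ m *
              Complex.exp (((-(γ * ((x 0) ^ 2 + (x 1) ^ 2)) / 2 : ℝ) : ℂ))‖ ^ (p + 1))
        = ∫ z : ℂ, g m z ^ (p + 1) := by
    intro m
    rw [← MeasurePreserving.integral_comp
      (Complex.orthonormalBasisOneI.measurePreserving_repr)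
      (Complex.orthonormalBasisOneI.repr.toHomeomorph.measurableEmbedding) _]
    refine integral_congr_ae (Filter.Eventually.of_forall fun z => ?_)
    simp only [Complex.orthonormalBasisOneI_repr_apply, Matrix.cons_val_zero,
      Matrix.cons_val_one, Matrix.head_cons]
    congr 1
    have hz : ((z.re : ℂ) + Complex.I * (z.im : ℂ)) = z := by
      rw [mul_comm]; exact z.re_add_im
    have hre : z.re ^ 2 + z.im ^ 2 = ‖z‖ ^ 2 := by
      rw [Complex.sq_norm, Complex.normSq_apply]; ring
    rw [hz, hre, norm_mul, norm_mul, norm_pow, Complex.norm_real, Real.norm_eq_abs,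
      abs_of_nonneg (by positivity),
      Complex.norm_exp, Complex.ofReal_re]
  -- integrability and value of ∫ g²
  have hg2eq : ∀ m, (fun z : ℂ => g m z ^ 2)
      = fun z : ℂ => (C m)^2 * (‖z‖ ^ (2*m) * Real.exp (-(γ * ‖z‖ ^ 2))) := by
    intro m
    funext z
    simp only [hgdef]
    have he : Real.exp (-(γ * ‖z‖ ^ 2) / 2) ^ 2 = Real.exp (-(γ * ‖z‖ ^ 2)) := by
      rw [sq, ← Real.exp_add]; ring_nf
    rw [mul_pow, mul_pow, he, pow_mul]
    ring
  have hg2int : ∀ m, Integrable (fun z : ℂ => g m z ^ 2) := fun m => by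
    rw [hg2eq m]; exact (aux_integrable hγ m).const_mul _
  have hg2val : ∀ m, (∫ z : ℂ, g m z ^ 2) = 1 := by
    intro m
    rw [hg2eq m, integral_const_mul, aux_integral hγ m, hC2 m]
    have h1 : (0:ℝ) < (m.factorial : ℝ) := by exact_mod_cast m.factorial_pos
    field_simp
  -- pointwise bound
  have hpw : ∀ m z, g m z ^ (p+1) ≤ S m ^ ((p-1)/2) * g m z ^ 2 := by
    intro m z
    have hg2S : g m z ^ 2 ≤ S m := by
      have key := aux_pow_mul_exp_neg_le m (t := γ * ‖z‖^2) (by positivity)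
      have k2 : (‖z‖^2)^m * Real.exp (-(γ * ‖z‖^2))
          ≤ (m:ℝ)^m * Real.exp (-(m:ℝ)) / γ^m := by
        rw [le_div_iff₀ (pow_pos hγ m)]
        calc (‖z‖^2)^m * Real.exp (-(γ * ‖z‖^2)) * γ^m
            = (γ * ‖z‖^2)^m * Real.exp (-(γ * ‖z‖^2)) := by rw [mul_pow]; ring
          _ ≤ _ := key
      have hrhs : S m = (C m)^2 * ((m:ℝ)^m * Real.exp (-(m:ℝ)) / γ^m) := by
        simp only [hSdef, div_pow]; ring
      have hlhs : g m z ^ 2 = (C m)^2 * ((‖z‖^2)^m * Real.exp (-(γ * ‖z‖^2))) := by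
        have := congrFun (hg2eq m) z
        rw [this, pow_mul]
      rw [hrhs, hlhs]
      exact mul_le_mul_of_nonneg_left k2 (sq_nonneg _)
    have hle : g m z ≤ Real.sqrt (S m) := by
      rw [← Real.sqrt_sq (hgnn m z)]
      exact Real.sqrt_le_sqrt hg2S
    rcases (hgnn m z).eq_or_lt with h0 | h0
    · rw [← h0, Real.zero_rpow (by linarith : p + 1 ≠ 0)]
      positivity
    · have e1 : g m z ^ (p+1) = g m z ^ (p-1) * g m z ^ 2 := by
        rw [← Real.rpow_natCast (g m z) 2, ← Real.rpow_add h0]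
        ring_nf
      have e2 : g m z ^ (p-1) ≤ Real.sqrt (S m) ^ (p-1) :=
        Real.rpow_le_rpow (hgnn m z) hle (by linarith)
      have e3 : Real.sqrt (S m) ^ (p-1) = S m ^ ((p-1)/2) := by
        rw [Real.sqrt_eq_rpow, ← Real.rpow_mul (hSnn m)]
        congr 1
        ring
      rw [e1]
      exact mul_le_mul_of_nonneg_right (e2.trans_eq e3) (by positivity)
  -- squeeze
  have htend : Tendsto (fun m => S m ^ ((p-1)/2)) atTop (nhds 0) := by
    have hS : Tendsto S atTop (nhds 0) := by
      have hSeq : S = fun m : ℕ => (γ/π) * ((m:ℝ)^m * Real.exp (-(m:ℝ)) / m.factorial) := by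
        funext m
        have h1 : (0:ℝ) < (m.factorial : ℝ) := by exact_mod_cast m.factorial_pos
        simp only [hSdef]
        rw [hC2 m, div_pow]
        field_simp
        ring
      rw [hSeq]
      simpa using Filter.Tendsto.const_mul (γ/π) aux_stirling_tendsto
    have := hS.rpow_const (Or.inr (by linarith : (0:ℝ) ≤ (p-1)/2))
    rwa [Real.zero_rpow (ne_of_gt (by linarith))] at this
  refine squeeze_zero (fun m => integral_nonneg fun x => Real.rpow_nonneg (norm_nonneg _) _)
    (fun m => ?_) htend
  rw [hA m]
  calc (∫ z : ℂ, g m z ^ (p+1))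
      ≤ ∫ z : ℂ, S m ^ ((p-1)/2) * g m z ^ 2 :=
        integral_mono_of_nonneg
          (Filter.Eventually.of_forall fun z => Real.rpow_nonneg (hgnn m z) _)
          ((hg2int m).const_mul _)
          (Filter.Eventually.of_forall fun z => hpw m z)
    _ = S m ^ ((p-1)/2) * ∫ z : ℂ, g m z ^ 2 := integral_const_mul _ _
    _ = S m ^ ((p-1)/2) := by rw [hg2val m, mul_one]
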